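/- arXiv:2310.16163 — 2 statements merged into one kernel-verified Lean document; each statement's English description precedes it below -/
import Mathlib

section
/- Let (ξ_k)_{k≥1} be an equinormed strongly multiplicative system (ESMS) of random variables that is uniformly bounded (there exists M such that |ξ_k| ≤ M almost surely for all k). Then for any sequence of real numbers (c_k) with ∑_{k=1}^∞ c_k² < ∞, the series ∑_{k=1}^∞ c_k ξ_k converges almost surely. -/
open MeasureTheory ProbabilityTheory Filter

set_option maxHeartbeats 1000000

section ESMSAux

open Finset

variable {Ω : Type*} [MeasureSpace Ω] [IsProbabilityMeasure (ℙ : Measure Ω)]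

/-- `exp (x - 2x²) ≤ 1 + x` for `x ≥ -1/2`. -/
lemma exp_quad_le {x : ℝ} (hx : -(1/2) ≤ x) : Real.exp (x - 2*x^2) ≤ 1 + x := by
  have h1x : (0:ℝ) < 1 + x := by linarith
  have h1 : x - 2*x^2 ≤ x / (1+x) := by
    rw [le_div_iff₀ h1x]; nlinarith [sq_nonneg x]
  have h2 : Real.exp (x / (1+x)) ≤ 1 + x := by
    have ht : (1:ℝ) - x/(1+x) = 1/(1+x) := by field_simp; ring
    have h3 : 1 - x/(1+x) ≤ Real.exp (-(x/(1+x))) := by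
      have := Real.add_one_le_exp (-(x/(1+x))); linarith
    have h4 : (1/(1+x)) * Real.exp (x/(1+x)) ≤ 1 := by
      calc (1/(1+x)) * Real.exp (x/(1+x)) ≤ Real.exp (-(x/(1+x))) * Real.exp (x/(1+x)) := by
            apply mul_le_mul_of_nonneg_right _ (Real.exp_pos _).le
            rw [← ht]; exact h3
        _ = 1 := by rw [← Real.exp_add]; simp
    rw [div_mul_eq_mul_div, div_le_iff₀ (by positivity), one_mul] at h4
    linarith [h4]
  exact le_trans (Real.exp_le_exp.mpr h1) h2

/-- integrability from an a.e. bound -/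
lemma integrable_of_ae_bdd {f : Ω → ℝ} (hf : Measurable f) {C : ℝ}
    (h : ∀ᵐ ω ∂(ℙ : Measure Ω), |f ω| ≤ C) : Integrable f (ℙ : Measure Ω) := by
  refine (integrable_const C).mono' hf.aestronglyMeasurable ?_
  simpa [Real.norm_eq_abs] using h

/-- expectation of the product `∏ (1 + d k * ξ k)` is 1 -/
lemma integral_prod_one_add
    (ξ : ℕ → Ω → ℝ) (hmeas : ∀ k, Measurable (ξ k))
    (hmean : ∀ k, 1 ≤ k → ∫ ω, ξ k ω = 0)
    (hmult : ∀ (s : Finset ℕ) (r : ℕ → ℕ), (∀ i ∈ s, 1 ≤ i) →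
      (∀ i ∈ s, r i = 1 ∨ r i = 2) →
      ∫ ω, ∏ i ∈ s, (ξ i ω) ^ (r i) = ∏ i ∈ s, ∫ ω, (ξ i ω) ^ (r i))
    {M : ℝ} (hMae : ∀ᵐ ω ∂(ℙ : Measure Ω), ∀ k, 1 ≤ k → |ξ k ω| ≤ M)
    (s : Finset ℕ) (hs : ∀ i ∈ s, 1 ≤ i) (d : ℕ → ℝ) :
    ∫ ω, ∏ k ∈ s, (1 + d k * ξ k ω) = 1 := by
  have hint : ∀ t : Finset ℕ, t ⊆ s → Integrable (fun ω => ∏ k ∈ t, (d k * ξ k ω)) ℙ := by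
    intro t ht
    refine integrable_of_ae_bdd (Finset.measurable_prod _ fun k _ => ((hmeas k).const_mul _))
      (C := ∏ k ∈ t, (|d k| * |M|)) ?_
    filter_upwards [hMae] with ω hω
    rw [abs_prod]
    refine Finset.prod_le_prod (fun k _ => abs_nonneg _) fun k hk => ?_
    rw [abs_mul]
    exact mul_le_mul_of_nonneg_left ((hω k (hs k (ht hk))).trans (le_abs_self M)) (abs_nonneg _)
  have hexp : ∀ ω, ∏ k ∈ s, (1 + d k * ξ k ω)
      = ∑ t ∈ s.powerset, ∏ k ∈ s \ t, (d k * ξ k ω) := by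
    intro ω
    rw [Finset.prod_add]
    simp
  have : ∫ ω, ∏ k ∈ s, (1 + d k * ξ k ω)
      = ∑ t ∈ s.powerset, ∫ ω, ∏ k ∈ s \ t, (d k * ξ k ω) := by
    simp_rw [hexp]
    exact integral_finset_sum _ fun t ht => hint _ (Finset.sdiff_subset)
  rw [this]
  rw [Finset.sum_eq_single s]
  · simp
  · intro t ht hne
    have htsub : t ⊆ s := Finset.mem_powerset.mp ht
    have hne' : (s \ t).Nonempty := by
      rw [Finset.sdiff_nonempty]
      intro hsub
      exact hne (Finset.Subset.antisymm htsub hsub)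
    obtain ⟨i, hi⟩ := hne'
    have : ∫ ω, ∏ k ∈ s \ t, (d k * ξ k ω)
        = (∏ k ∈ s \ t, d k) * ∫ ω, ∏ k ∈ s \ t, ξ k ω := by
      simp_rw [Finset.prod_mul_distrib]
      exact integral_const_mul _ _
    rw [this]
    have hm : ∫ ω, ∏ k ∈ s \ t, ξ k ω = 0 := by
      have := hmult (s \ t) (fun _ => 1) (fun i hi => hs i (Finset.sdiff_subset hi))
        (fun i _ => Or.inl rfl)
      simp only [pow_one] at this
      rw [this]
      exact Finset.prod_eq_zero hi (hmean i (hs i (Finset.sdiff_subset hi)))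
    rw [hm, mul_zero]
  · intro h; exact absurd (Finset.mem_powerset.mpr (Finset.Subset.refl s)) h

lemma mgf_bound
    (ξ : ℕ → Ω → ℝ) (hmeas : ∀ k, Measurable (ξ k))
    (hmean : ∀ k, 1 ≤ k → ∫ ω, ξ k ω = 0)
    (hmult : ∀ (s : Finset ℕ) (r : ℕ → ℕ), (∀ i ∈ s, 1 ≤ i) →
      (∀ i ∈ s, r i = 1 ∨ r i = 2) →
      ∫ ω, ∏ i ∈ s, (ξ i ω) ^ (r i) = ∏ i ∈ s, ∫ ω, (ξ i ω) ^ (r i))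
    {M : ℝ} (hM : 1 ≤ M) (hMae : ∀ᵐ ω ∂(ℙ : Measure Ω), ∀ k, 1 ≤ k → |ξ k ω| ≤ M)
    (s : Finset ℕ) (hs : ∀ i ∈ s, 1 ≤ i) (d : ℕ → ℝ)
    (hd : ∀ k ∈ s, M * |d k| ≤ 1/2) :
    ∫ ω, Real.exp (∑ k ∈ s, d k * ξ k ω) ≤ Real.exp (2 * M^2 * ∑ k ∈ s, (d k)^2) := by
  have hM0 : (0:ℝ) < M := lt_of_lt_of_le one_pos hM
  -- pointwise bound
  have hpt : ∀ᵐ ω ∂(ℙ : Measure Ω), Real.exp (∑ k ∈ s, d k * ξ k ω)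
      ≤ (∏ k ∈ s, (1 + d k * ξ k ω)) * Real.exp (2 * M^2 * ∑ k ∈ s, (d k)^2) := by
    filter_upwards [hMae] with ω hω
    have hx : ∀ k ∈ s, -(1/2 : ℝ) ≤ d k * ξ k ω ∧ |d k * ξ k ω| ≤ M * |d k| := by
      intro k hk
      have h1 : |d k * ξ k ω| ≤ |d k| * M := by
        rw [abs_mul]
        exact mul_le_mul_of_nonneg_left (hω k (hs k hk)) (abs_nonneg _)
      have h2 : |d k * ξ k ω| ≤ M * |d k| := by rw [mul_comm M]; exact h1
      exact ⟨by have := (abs_le.mp (h2.trans (hd k hk))).1; linarith, h2⟩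
    calc Real.exp (∑ k ∈ s, d k * ξ k ω)
        = (∏ k ∈ s, Real.exp ((d k * ξ k ω) - 2*(d k * ξ k ω)^2)) *
            Real.exp (∑ k ∈ s, 2*(d k * ξ k ω)^2) := by
          rw [← Real.exp_sum, ← Real.exp_add, ← Finset.sum_add_distrib]
          congr 1
          exact Finset.sum_congr rfl fun k _ => by ring
      _ ≤ (∏ k ∈ s, (1 + d k * ξ k ω)) * Real.exp (2 * M^2 * ∑ k ∈ s, (d k)^2) := by
          apply mul_le_mul
          · exact Finset.prod_le_prod (fun k _ => (Real.exp_pos _).le)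
              (fun k hk => exp_quad_le (hx k hk).1)
          · apply Real.exp_le_exp.mpr
            rw [Finset.mul_sum]
            refine Finset.sum_le_sum fun k hk => ?_
            have h2 := (hx k hk).2
            have : (d k * ξ k ω)^2 ≤ (M * |d k|)^2 := by
              rw [← sq_abs]
              exact pow_le_pow_left₀ (abs_nonneg _) h2 2
            calc 2*(d k * ξ k ω)^2 ≤ 2*(M*|d k|)^2 := by linarith
              _ = 2 * M^2 * (d k)^2 := by rw [mul_pow, sq_abs]; ring
          · exact (Real.exp_pos _).le
          · exact Finset.prod_nonneg fun k hk =>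
              le_trans (Real.exp_pos _).le (exp_quad_le (hx k hk).1)
  -- integrate
  have hintL : Integrable (fun ω => Real.exp (∑ k ∈ s, d k * ξ k ω)) ℙ := by
    refine integrable_of_ae_bdd (by
      apply Real.measurable_exp.comp
      exact Finset.measurable_sum _ fun k _ => (hmeas k).const_mul _)
      (C := Real.exp (∑ k ∈ s, |d k| * M)) ?_
    filter_upwards [hMae] with ω hω
    rw [abs_of_pos (Real.exp_pos _)]
    apply Real.exp_le_exp.mpr
    refine Finset.sum_le_sum fun k hk => ?_
    calc d k * ξ k ω ≤ |d k * ξ k ω| := le_abs_self _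
      _ ≤ |d k| * M := by
          rw [abs_mul]
          exact mul_le_mul_of_nonneg_left (hω k (hs k hk)) (abs_nonneg _)
  have hintR : Integrable (fun ω => (∏ k ∈ s, (1 + d k * ξ k ω)) *
      Real.exp (2 * M^2 * ∑ k ∈ s, (d k)^2)) ℙ := by
    apply Integrable.mul_const
    refine integrable_of_ae_bdd (Finset.measurable_prod _ fun k _ =>
      (measurable_const.add ((hmeas k).const_mul _))) (C := ∏ k ∈ s, (1 + |d k| * M)) ?_
    filter_upwards [hMae] with ω hω
    rw [abs_prod]
    refine Finset.prod_le_prod (fun k _ => abs_nonneg _) fun k hk => ?_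
    calc |1 + d k * ξ k ω| ≤ |1| + |d k * ξ k ω| := abs_add_le _ _
      _ ≤ 1 + |d k| * M := by
          rw [abs_one, abs_mul]
          exact add_le_add_right (mul_le_mul_of_nonneg_left (hω k (hs k hk)) (abs_nonneg _)) _
  calc ∫ ω, Real.exp (∑ k ∈ s, d k * ξ k ω)
      ≤ ∫ ω, (∏ k ∈ s, (1 + d k * ξ k ω)) * Real.exp (2 * M^2 * ∑ k ∈ s, (d k)^2) :=
        integral_mono_ae hintL hintR hpt
    _ = Real.exp (2 * M^2 * ∑ k ∈ s, (d k)^2) := by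
        rw [integral_mul_const, integral_prod_one_add ξ hmeas hmean hmult hMae s hs d, one_mul]

lemma tail_one
    (ξ : ℕ → Ω → ℝ) (hmeas : ∀ k, Measurable (ξ k))
    (hmean : ∀ k, 1 ≤ k → ∫ ω, ξ k ω = 0)
    (hmult : ∀ (s : Finset ℕ) (r : ℕ → ℕ), (∀ i ∈ s, 1 ≤ i) →
      (∀ i ∈ s, r i = 1 ∨ r i = 2) →
      ∫ ω, ∏ i ∈ s, (ξ i ω) ^ (r i) = ∏ i ∈ s, ∫ ω, (ξ i ω) ^ (r i))
    {M : ℝ} (hM : 1 ≤ M) (hMae : ∀ᵐ ω ∂(ℙ : Measure Ω), ∀ k, 1 ≤ k → |ξ k ω| ≤ M)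
    (s : Finset ℕ) (hs : ∀ i ∈ s, 1 ≤ i) (e : ℕ → ℝ) (b lam : ℝ) (hlam : 0 ≤ lam)
    (hd : ∀ k ∈ s, M * |lam * e k| ≤ 1/2) :
    (ℙ : Measure Ω) {ω | b ≤ ∑ k ∈ s, e k * ξ k ω}
      ≤ ENNReal.ofReal (Real.exp (-(lam*b) + 2*M^2*lam^2 * ∑ k ∈ s, (e k)^2)) := by
  set X : Ω → ℝ := fun ω => ∑ k ∈ s, e k * ξ k ω with hX
  have h_int : Integrable (fun ω => Real.exp (lam * X ω)) ℙ := by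
    refine integrable_of_ae_bdd (by
      apply Real.measurable_exp.comp
      exact (Finset.measurable_sum _ fun k _ => (hmeas k).const_mul _).const_mul _)
      (C := Real.exp (∑ k ∈ s, |lam * e k| * M)) ?_
    filter_upwards [hMae] with ω hω
    rw [abs_of_pos (Real.exp_pos _)]
    apply Real.exp_le_exp.mpr
    rw [hX, Finset.mul_sum]
    refine Finset.sum_le_sum fun k hk => ?_
    calc lam * (e k * ξ k ω) ≤ |lam * (e k * ξ k ω)| := le_abs_self _
      _ = |lam * e k| * |ξ k ω| := by rw [← mul_assoc, abs_mul]
      _ ≤ |lam * e k| * M := mul_le_mul_of_nonneg_left (hω k (hs k hk)) (abs_nonneg _)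
  have hcher := measure_ge_le_exp_mul_mgf (μ := (ℙ : Measure Ω)) (X := X) b hlam h_int
  have hmgf : mgf X ℙ lam ≤ Real.exp (2*M^2*lam^2 * ∑ k ∈ s, (e k)^2) := by
    have : (fun ω => Real.exp (lam * X ω)) = fun ω => Real.exp (∑ k ∈ s, (lam * e k) * ξ k ω) := by
      funext ω
      rw [hX, Finset.mul_sum]
      congr 1
      exact Finset.sum_congr rfl fun k _ => by ring
    rw [mgf]
    calc ∫ ω, Real.exp (lam * X ω) ∂ℙ
        = ∫ ω, Real.exp (∑ k ∈ s, (lam * e k) * ξ k ω) := by rw [this]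
      _ ≤ Real.exp (2 * M^2 * ∑ k ∈ s, (lam * e k)^2) :=
          mgf_bound ξ hmeas hmean hmult hM hMae s hs _ hd
      _ = Real.exp (2*M^2*lam^2 * ∑ k ∈ s, (e k)^2) := by
          congr 1
          rw [Finset.mul_sum, Finset.mul_sum]
          exact Finset.sum_congr rfl fun k _ => by ring
  have htr : ((ℙ : Measure Ω) {ω | b ≤ X ω}).toReal
      ≤ Real.exp (-(lam*b) + 2*M^2*lam^2 * ∑ k ∈ s, (e k)^2) := by
    calc ((ℙ : Measure Ω) {ω | b ≤ X ω}).toReal ≤ Real.exp (-lam * b) * mgf X ℙ lam := hcher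
      _ ≤ Real.exp (-lam * b) * Real.exp (2*M^2*lam^2 * ∑ k ∈ s, (e k)^2) :=
          mul_le_mul_of_nonneg_left hmgf (Real.exp_pos _).le
      _ = Real.exp (-(lam*b) + 2*M^2*lam^2 * ∑ k ∈ s, (e k)^2) := by
          rw [← Real.exp_add]; ring_nf
  calc (ℙ : Measure Ω) {ω | b ≤ X ω}
      = ENNReal.ofReal (((ℙ : Measure Ω) {ω | b ≤ X ω}).toReal) :=
        (ENNReal.ofReal_toReal (measure_ne_top _ _)).symm
    _ ≤ ENNReal.ofReal (Real.exp (-(lam*b) + 2*M^2*lam^2 * ∑ k ∈ s, (e k)^2)) :=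
        ENNReal.ofReal_le_ofReal htr

lemma tail_two
    (ξ : ℕ → Ω → ℝ) (hmeas : ∀ k, Measurable (ξ k))
    (hmean : ∀ k, 1 ≤ k → ∫ ω, ξ k ω = 0)
    (hmult : ∀ (s : Finset ℕ) (r : ℕ → ℕ), (∀ i ∈ s, 1 ≤ i) →
      (∀ i ∈ s, r i = 1 ∨ r i = 2) →
      ∫ ω, ∏ i ∈ s, (ξ i ω) ^ (r i) = ∏ i ∈ s, ∫ ω, (ξ i ω) ^ (r i))
    {M : ℝ} (hM : 1 ≤ M) (hMae : ∀ᵐ ω ∂(ℙ : Measure Ω), ∀ k, 1 ≤ k → |ξ k ω| ≤ M)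
    (s : Finset ℕ) (hs : ∀ i ∈ s, 1 ≤ i) (c : ℕ → ℝ) {v b : ℝ} (hv : 0 < v)
    (hmass : ∑ k ∈ s, (c k)^2 ≤ v) (hb : 0 < b) :
    (ℙ : Measure Ω) {ω | b ≤ |∑ k ∈ s, c k * ξ k ω|}
      ≤ ENNReal.ofReal (2 * Real.exp (-(min (b^2/(8*M^2*v)) (b/(4*M*Real.sqrt v))))) := by
  have hM0 : (0:ℝ) < M := lt_of_lt_of_le one_pos hM
  have hsv : (0:ℝ) < Real.sqrt v := Real.sqrt_pos.mpr hv
  set E := min (b^2/(8*M^2*v)) (b/(4*M*Real.sqrt v)) with hE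
  rcases s.eq_empty_or_nonempty with rfl | hne
  · simp only [Finset.sum_empty, abs_zero]
    have : {ω : Ω | b ≤ (0:ℝ)} = ∅ := by
      ext ω; simp [not_le.mpr hb]
    rw [this]
    simp
  set cstar := s.sup' hne (fun k => |c k|) with hcstar
  obtain ⟨k0, hk0, hk0e⟩ := s.exists_mem_eq_sup' hne (fun k => |c k|)
  have hck : ∀ k ∈ s, |c k| ≤ cstar := fun k hk => Finset.le_sup' (fun j => |c j|) hk
  have hcstar0 : 0 ≤ cstar := le_trans (abs_nonneg _) (hck k0 hk0)
  have hcsq : cstar^2 ≤ v := by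
    calc cstar^2 = (c k0)^2 := by rw [hcstar, hk0e, sq_abs]
      _ ≤ ∑ k ∈ s, (c k)^2 := Finset.single_le_sum (f := fun k => (c k)^2) (fun k _ => sq_nonneg _) hk0
      _ ≤ v := hmass
  rcases eq_or_lt_of_le hcstar0 with hc0 | hc0
  · -- all coefficients zero
    have hz : ∀ k ∈ s, c k = 0 := by
      intro k hk
      have := hck k hk
      rw [← hc0] at this
      exact abs_eq_zero.mp (le_antisymm this (abs_nonneg _))
    have : {ω : Ω | b ≤ |∑ k ∈ s, c k * ξ k ω|} = ∅ := by
      ext ω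
      simp only [Set.mem_setOf_eq, Set.mem_empty_iff_false, iff_false, not_le]
      rw [Finset.sum_eq_zero fun k hk => by rw [hz k hk, zero_mul]]
      simpa using hb
    rw [this]; simp
  · -- main case
    have key : ∀ e : ℕ → ℝ, (∀ k ∈ s, |e k| ≤ cstar) → (∑ k ∈ s, (e k)^2 ≤ v) →
        (ℙ : Measure Ω) {ω | b ≤ ∑ k ∈ s, e k * ξ k ω} ≤ ENNReal.ofReal (Real.exp (-E)) := by
      intro e he hev
      rcases le_or_gt (b * cstar) (2*M*v) with hcase | hcase
      · -- subgaussian regime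
        set lam := b/(4*M^2*v) with hlam
        have hlam0 : 0 ≤ lam := by positivity
        have hd : ∀ k ∈ s, M * |lam * e k| ≤ 1/2 := by
          intro k hk
          have : |lam * e k| ≤ lam * cstar := by
            rw [abs_mul, abs_of_nonneg hlam0]
            exact mul_le_mul_of_nonneg_left (he k hk) hlam0
          calc M * |lam * e k| ≤ M * (lam * cstar) := mul_le_mul_of_nonneg_left this hM0.le
            _ = (b * cstar) / (4*M*v) := by rw [hlam]; field_simp
            _ ≤ (2*M*v) / (4*M*v) := by
                apply (div_le_div_iff_of_pos_right (by positivity)).mpr hcase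
            _ = 1/2 := by field_simp; ring
        refine (tail_one ξ hmeas hmean hmult hM hMae s hs e b lam hlam0 hd).trans ?_
        apply ENNReal.ofReal_le_ofReal
        apply Real.exp_le_exp.mpr
        have h1 : 2*M^2*lam^2 * ∑ k ∈ s, (e k)^2 ≤ 2*M^2*lam^2*v :=
          mul_le_mul_of_nonneg_left hev (by positivity)
        have h2 : -(lam*b) + 2*M^2*lam^2*v = -(b^2/(8*M^2*v)) := by
          rw [hlam]; field_simp; ring
        have h3 : E ≤ b^2/(8*M^2*v) := min_le_left _ _
        linarith
      · -- Bernstein regime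
        set lam := 1/(2*M*cstar) with hlam
        have hlam0 : 0 ≤ lam := by positivity
        have hd : ∀ k ∈ s, M * |lam * e k| ≤ 1/2 := by
          intro k hk
          have : |lam * e k| ≤ lam * cstar := by
            rw [abs_mul, abs_of_nonneg hlam0]
            exact mul_le_mul_of_nonneg_left (he k hk) hlam0
          calc M * |lam * e k| ≤ M * (lam * cstar) := mul_le_mul_of_nonneg_left this hM0.le
            _ = 1/2 := by rw [hlam]; field_simp
        refine (tail_one ξ hmeas hmean hmult hM hMae s hs e b lam hlam0 hd).trans ?_
        apply ENNReal.ofReal_le_ofReal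
        apply Real.exp_le_exp.mpr
        have h1 : 2*M^2*lam^2 * ∑ k ∈ s, (e k)^2 ≤ 2*M^2*lam^2*v :=
          mul_le_mul_of_nonneg_left hev (by positivity)
        have h2 : 2*M^2*lam^2*v = v/(2*cstar^2) := by
          rw [hlam]; field_simp
        have h3 : v/(2*cstar^2) ≤ b/(4*M*cstar) := by
          rw [div_le_div_iff₀ (by positivity) (by positivity)]
          nlinarith
        have h4 : -(lam*b) = -(b/(2*M*cstar)) := by rw [hlam]; field_simp
        have hcs : cstar ≤ Real.sqrt v := by
          rw [← Real.sqrt_sq hcstar0]; exact Real.sqrt_le_sqrt hcsq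
        have h5 : b/(4*M*Real.sqrt v) ≤ b/(4*M*cstar) :=
          div_le_div_of_nonneg_left hb.le (by positivity) (by nlinarith)
        have h6 : E ≤ b/(4*M*Real.sqrt v) := min_le_right _ _
        have h7 : b/(2*M*cstar) - b/(4*M*cstar) = b/(4*M*cstar) := by
          field_simp
          ring
        linarith
    have hneg : ∀ ω : Ω, ∑ k ∈ s, (-(c k)) * ξ k ω = -(∑ k ∈ s, c k * ξ k ω) := by
      intro ω
      rw [← Finset.sum_neg_distrib]
      exact Finset.sum_congr rfl fun k _ => by ring
    have hsub : {ω : Ω | b ≤ |∑ k ∈ s, c k * ξ k ω|}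
        ⊆ {ω : Ω | b ≤ ∑ k ∈ s, c k * ξ k ω} ∪ {ω : Ω | b ≤ ∑ k ∈ s, (-(c k)) * ξ k ω} := by
      intro ω hω
      simp only [Set.mem_setOf_eq] at hω
      rcases abs_cases (∑ k ∈ s, c k * ξ k ω) with ⟨heq, _⟩ | ⟨heq, _⟩
      · left; rw [Set.mem_setOf_eq, ← heq]; exact hω
      · right; rw [Set.mem_setOf_eq, hneg ω, ← heq]; exact hω
    calc (ℙ : Measure Ω) {ω | b ≤ |∑ k ∈ s, c k * ξ k ω|}
        ≤ (ℙ : Measure Ω) ({ω : Ω | b ≤ ∑ k ∈ s, c k * ξ k ω}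
            ∪ {ω : Ω | b ≤ ∑ k ∈ s, (-(c k)) * ξ k ω}) := measure_mono hsub
      _ ≤ (ℙ : Measure Ω) {ω : Ω | b ≤ ∑ k ∈ s, c k * ξ k ω}
            + (ℙ : Measure Ω) {ω : Ω | b ≤ ∑ k ∈ s, (-(c k)) * ξ k ω} := measure_union_le _ _
      _ ≤ ENNReal.ofReal (Real.exp (-E)) + ENNReal.ofReal (Real.exp (-E)) := by
          gcongr
          · exact key c hck hmass
          · exact key (fun k => -(c k)) (fun k hk => by rw [abs_neg]; exact hck k hk)
              (by simpa only [neg_sq] using hmass)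
      _ = ENNReal.ofReal (2 * Real.exp (-E)) := by
          rw [← ENNReal.ofReal_add (Real.exp_pos _).le (Real.exp_pos _).le]
          congr 1
          ring

/-- elementary exp bound -/
lemma exp_neg_le_inv {t : ℝ} (ht : 0 ≤ t) : Real.exp (-t) ≤ 1/(1+t) := by
  have h := Real.add_one_le_exp t
  rw [Real.exp_neg]
  rw [one_div]
  exact inv_anti₀ (by linarith) (by linarith)

/-- the key maximal inequality, by bisection on the mass of the interval -/
lemma max_ineq
    (ξ : ℕ → Ω → ℝ) (hmeas : ∀ k, Measurable (ξ k))
    (hmean : ∀ k, 1 ≤ k → ∫ ω, ξ k ω = 0)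
    (hmult : ∀ (s : Finset ℕ) (r : ℕ → ℕ), (∀ i ∈ s, 1 ≤ i) →
      (∀ i ∈ s, r i = 1 ∨ r i = 2) →
      ∫ ω, ∏ i ∈ s, (ξ i ω) ^ (r i) = ∏ i ∈ s, ∫ ω, (ξ i ω) ^ (r i))
    {M : ℝ} (hM : 1 ≤ M) (hMae : ∀ᵐ ω ∂(ℙ : Measure Ω), ∀ k, 1 ≤ k → |ξ k ω| ≤ M)
    (c : ℕ → ℝ) (L : ℕ) :
    ∀ (m N : ℕ), N ≤ m + L → ∀ (v a : ℝ), 0 < v →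
      (∑ k ∈ Finset.Ioc m N, (c k)^2) ≤ v → 1024 * M * Real.sqrt v ≤ a →
      (ℙ : Measure Ω) {ω | ∃ n ∈ Finset.Ioc m N, a ≤ |∑ k ∈ Finset.Ioc m n, c k * ξ k ω|}
        ≤ ENNReal.ofReal (2 * Real.exp (-(a / (32 * M * Real.sqrt v)))) := by
  have hM0 : (0:ℝ) < M := lt_of_lt_of_le one_pos hM
  induction L with
  | zero =>
    intro m N hNL v a hv _ _
    have hempty : {ω : Ω | ∃ n ∈ Finset.Ioc m N, a ≤ |∑ k ∈ Finset.Ioc m n, c k * ξ k ω|} = ∅ := by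
      ext ω
      simp [Finset.Ioc_eq_empty (not_lt.mpr (by omega : N ≤ m))]
    rw [hempty]
    simp
  | succ L IH =>
    intro m N hNL v a hv hmass ha
    by_cases hmN : N ≤ m
    · have hempty : {ω : Ω | ∃ n ∈ Finset.Ioc m N, a ≤ |∑ k ∈ Finset.Ioc m n, c k * ξ k ω|} = ∅ := by
        ext ω
        simp [Finset.Ioc_eq_empty (not_lt.mpr hmN)]
      rw [hempty]; simp
    push_neg at hmN
    classical
    have hw : (0:ℝ) < Real.sqrt v := Real.sqrt_pos.mpr hv
    have ha0 : (0:ℝ) < a := lt_of_lt_of_le (by positivity) ha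
    set P : ℕ → Prop := fun j => (∑ k ∈ Finset.Ioc m j, (c k)^2) ≤ v/2 with hP
    set p := Nat.findGreatest P (N-1) with hpdef
    have hm_le : m ≤ N - 1 := by omega
    have hPm : P m := by
      simp only [hP, Finset.Ioc_self, Finset.sum_empty]
      linarith
    have hmp : m ≤ p := Nat.le_findGreatest hm_le hPm
    have hpN : p ≤ N - 1 := Nat.findGreatest_le _
    have hp1N : p + 1 ≤ N := by omega
    have hPp : P p := Nat.findGreatest_spec hm_le hPm
    have hmass_left : ∑ k ∈ Finset.Ioc m p, (c k)^2 ≤ v/2 := hPp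
    have hmass_mid : ∑ k ∈ Finset.Ioc m (p+1), (c k)^2 ≤ v := by
      refine le_trans (Finset.sum_le_sum_of_subset_of_nonneg
        (Finset.Ioc_subset_Ioc le_rfl hp1N) (fun k _ _ => sq_nonneg _)) hmass
    have hmass_right : ∑ k ∈ Finset.Ioc (p+1) N, (c k)^2 ≤ v/2 := by
      by_cases hpN1 : p + 1 ≤ N - 1
      · have hnotP : ¬ P (p+1) := Nat.findGreatest_is_greatest (by omega) hpN1
        have hsplit : (∑ k ∈ Finset.Ioc m (p+1), (c k)^2) + ∑ k ∈ Finset.Ioc (p+1) N, (c k)^2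
            = ∑ k ∈ Finset.Ioc m N, (c k)^2 :=
          Finset.sum_Ioc_consecutive _ (by omega) hp1N
        simp only [hP, not_le] at hnotP
        linarith
      · have hpeq : p + 1 = N := by omega
        rw [hpeq, Finset.Ioc_self, Finset.sum_empty]
        linarith
    -- events
    set SA := {ω : Ω | ∃ n ∈ Finset.Ioc m p, a ≤ |∑ k ∈ Finset.Ioc m n, c k * ξ k ω|} with hSA
    set SB := {ω : Ω | a/4 ≤ |∑ k ∈ Finset.Ioc m (p+1), c k * ξ k ω|} with hSB
    set SC := {ω : Ω | ∃ n ∈ Finset.Ioc (p+1) N, 3*a/4 ≤ |∑ k ∈ Finset.Ioc (p+1) n, c k * ξ k ω|}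
      with hSC
    have hsub : {ω : Ω | ∃ n ∈ Finset.Ioc m N, a ≤ |∑ k ∈ Finset.Ioc m n, c k * ξ k ω|}
        ⊆ SA ∪ SB ∪ SC := by
      intro ω hω
      obtain ⟨n, hn, hna⟩ := hω
      rw [Finset.mem_Ioc] at hn
      by_cases hnp : n ≤ p
      · exact Or.inl (Or.inl ⟨n, Finset.mem_Ioc.mpr ⟨hn.1, hnp⟩, hna⟩)
      push_neg at hnp
      by_cases hBc : a/4 ≤ |∑ k ∈ Finset.Ioc m (p+1), c k * ξ k ω|
      · exact Or.inl (Or.inr hBc)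
      push_neg at hBc
      have hdec : (∑ k ∈ Finset.Ioc m (p+1), c k * ξ k ω)
          + ∑ k ∈ Finset.Ioc (p+1) n, c k * ξ k ω = ∑ k ∈ Finset.Ioc m n, c k * ξ k ω :=
        Finset.sum_Ioc_consecutive _ (by omega) (by omega)
      have htri : |∑ k ∈ Finset.Ioc m n, c k * ξ k ω|
          ≤ |∑ k ∈ Finset.Ioc m (p+1), c k * ξ k ω| + |∑ k ∈ Finset.Ioc (p+1) n, c k * ξ k ω| := by
        rw [← hdec]
        exact abs_add_le _ _
      have hn1 : p + 1 < n := by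
        rcases eq_or_lt_of_le (by omega : p + 1 ≤ n) with heq | hlt
        · exfalso
          rw [← heq] at hna
          linarith
        · exact hlt
      refine Or.inr ⟨n, Finset.mem_Ioc.mpr ⟨hn1, hn.2⟩, by linarith⟩
    -- bounds on the three pieces
    have hv2 : (0:ℝ) < v/2 := by linarith
    have hsqrt2 : Real.sqrt (v/2) = Real.sqrt v / Real.sqrt 2 := Real.sqrt_div hv.le 2
    set r := Real.sqrt 2 with hrdef
    have hr2 : r^2 = 2 := Real.sq_sqrt (by norm_num)
    have hr0 : (0:ℝ) < r := Real.sqrt_pos.mpr (by norm_num)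
    have hr14 : (1.41:ℝ) ≤ r := by nlinarith
    have hw2 : (0:ℝ) < Real.sqrt (v/2) := Real.sqrt_pos.mpr hv2
    have hsw : Real.sqrt v ^ 2 = v := Real.sq_sqrt hv.le
    have haA : 1024 * M * Real.sqrt (v/2) ≤ a := by
      have h1 : Real.sqrt (v/2) ≤ Real.sqrt v := Real.sqrt_le_sqrt (by linarith)
      nlinarith
    have hA : (ℙ : Measure Ω) SA ≤ ENNReal.ofReal (2 * Real.exp (-(a / (32 * M * Real.sqrt (v/2))))) :=
      IH m p (by omega) (v/2) a hv2 hmass_left haA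
    have haC : 1024 * M * Real.sqrt (v/2) ≤ 3*a/4 := by
      rw [hsqrt2]
      have h1 : Real.sqrt v / r ≤ (3/4) * Real.sqrt v := by
        rw [div_le_iff₀ hr0]
        nlinarith
      nlinarith
    have hC : (ℙ : Measure Ω) SC
        ≤ ENNReal.ofReal (2 * Real.exp (-((3*a/4) / (32 * M * Real.sqrt (v/2))))) :=
      IH (p+1) N (by omega) (v/2) (3*a/4) hv2 hmass_right haC
    have hBb := tail_two ξ hmeas hmean hmult hM hMae (Finset.Ioc m (p+1))
      (fun i hi => by have := (Finset.mem_Ioc.mp hi).1; omega) c hv hmass_mid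
      (b := a/4) (by positivity)
    have hmin : a/(16*M*Real.sqrt v) ≤ min ((a/4)^2/(8*M^2*v)) ((a/4)/(4*M*Real.sqrt v)) := by
      apply le_min
      · have hkey : (a*M*Real.sqrt v) * (1024*M*Real.sqrt v) ≤ (a*M*Real.sqrt v) * a :=
          mul_le_mul_of_nonneg_left ha (by positivity)
        rw [div_le_div_iff₀ (by positivity) (by positivity)]
        nlinarith [hkey, hsw, mul_pos ha0 (mul_pos hM0 hM0),
          mul_nonneg (mul_nonneg ha0.le (mul_nonneg hM0.le hM0.le)) (mul_nonneg hw.le hw.le)]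
      · apply le_of_eq
        rw [div_div]
        congr 1
        ring
    have hB : (ℙ : Measure Ω) SB ≤ ENNReal.ofReal (2 * Real.exp (-(a/(16*M*Real.sqrt v)))) := by
      refine hBb.trans (ENNReal.ofReal_le_ofReal ?_)
      have := Real.exp_le_exp.mpr (neg_le_neg hmin)
      linarith
    -- final arithmetic
    set st := a / (32 * M * Real.sqrt v) with hstdef
    have hst32 : (32:ℝ) ≤ st := by
      rw [hstdef, le_div_iff₀ (by positivity)]
      nlinarith
    have hxA : a / (32*M*Real.sqrt (v/2)) = r * st := by
      rw [hsqrt2, hstdef]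
      field_simp
    have hxC : (3*a/4) / (32*M*Real.sqrt (v/2)) = (3*r/4) * st := by
      rw [hsqrt2, hstdef]
      field_simp
    have hxB : a/(16*M*Real.sqrt v) = 2 * st := by
      rw [hstdef]
      field_simp
      ring
    have hterm : ∀ y δ : ℝ, 0 ≤ δ → st + δ ≤ y →
        Real.exp (-y) ≤ Real.exp (-st) * (1/(1+δ)) := by
      intro y δ hδ hy
      calc Real.exp (-y) ≤ Real.exp (-(st + δ)) := Real.exp_le_exp.mpr (by linarith)
        _ = Real.exp (-st) * Real.exp (-δ) := by rw [← Real.exp_add]; ring_nf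
        _ ≤ Real.exp (-st) * (1/(1+δ)) :=
            mul_le_mul_of_nonneg_left (exp_neg_le_inv hδ) (Real.exp_pos _).le
    have e1 : Real.exp (-(r * st)) ≤ Real.exp (-st) * (1/14) := by
      have h := hterm (r * st) 13 (by norm_num) (by nlinarith)
      calc Real.exp (-(r*st)) ≤ Real.exp (-st) * (1/(1+13)) := h
        _ = Real.exp (-st) * (1/14) := by norm_num
    have e2 : Real.exp (-(2 * st)) ≤ Real.exp (-st) * (1/33) := by
      have h := hterm (2 * st) 32 (by norm_num) (by linarith)
      calc Real.exp (-(2*st)) ≤ Real.exp (-st) * (1/(1+32)) := h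
        _ = Real.exp (-st) * (1/33) := by norm_num
    have e3 : Real.exp (-((3*r/4) * st)) ≤ Real.exp (-st) * (1/(1+1.8)) := by
      refine hterm ((3*r/4) * st) 1.8 (by norm_num) ?_
      have h1 : (0.0575:ℝ) ≤ 3*r/4 - 1 := by nlinarith
      nlinarith [mul_le_mul h1 hst32 (by norm_num : (0:ℝ) ≤ 32) (by linarith : (0:ℝ) ≤ 3*r/4 - 1)]
    have harith : 2 * Real.exp (-(r*st)) + 2 * Real.exp (-(2*st)) + 2 * Real.exp (-((3*r/4)*st))
        ≤ 2 * Real.exp (-st) := by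
      have hp0 := Real.exp_pos (-st)
      nlinarith [e1, e2, e3]
    calc (ℙ : Measure Ω) {ω | ∃ n ∈ Finset.Ioc m N, a ≤ |∑ k ∈ Finset.Ioc m n, c k * ξ k ω|}
        ≤ (ℙ : Measure Ω) (SA ∪ SB ∪ SC) := measure_mono hsub
      _ ≤ (ℙ : Measure Ω) (SA ∪ SB) + (ℙ : Measure Ω) SC := measure_union_le _ _
      _ ≤ ((ℙ : Measure Ω) SA + (ℙ : Measure Ω) SB) + (ℙ : Measure Ω) SC :=
          add_le_add_left (measure_union_le _ _) _
      _ ≤ (ENNReal.ofReal (2 * Real.exp (-(r * st))) + ENNReal.ofReal (2 * Real.exp (-(2 * st))))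
            + ENNReal.ofReal (2 * Real.exp (-((3*r/4) * st))) := by
          gcongr
          · rw [← hxA]; exact hA
          · rw [← hxB]; exact hB
          · rw [← hxC]; exact hC
      _ = ENNReal.ofReal (2 * Real.exp (-(r*st)) + 2 * Real.exp (-(2*st))
            + 2 * Real.exp (-((3*r/4)*st))) := by
          rw [← ENNReal.ofReal_add (by positivity) (by positivity),
            ← ENNReal.ofReal_add (by positivity) (by positivity)]
      _ ≤ ENNReal.ofReal (2 * Real.exp (-st)) := ENNReal.ofReal_le_ofReal harith

end ESMSAux

/-- A uniformly bounded equinormed strongly multiplicative system (ESMS)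
`ξ₁, ξ₂, …` satisfies: for any real sequence `(c_k)` with `∑ c_k² < ∞`, the series
`∑ c_k ξ_k` converges almost surely. -/
theorem esms_series_converges_ae
    {Ω : Type*} [MeasureSpace Ω] [IsProbabilityMeasure (ℙ : Measure Ω)]
    (ξ : ℕ → Ω → ℝ) (hmeas : ∀ k, Measurable (ξ k))
    -- mean zero and unit second moment
    (hmean : ∀ k, 1 ≤ k → ∫ ω, ξ k ω = 0)
    (hvar : ∀ k, 1 ≤ k → ∫ ω, (ξ k ω) ^ 2 = 1)
    -- strongly multiplicative: expectations of products with exponents in {1,2} factorize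
    (hmult : ∀ (s : Finset ℕ) (r : ℕ → ℕ), (∀ i ∈ s, 1 ≤ i) →
      (∀ i ∈ s, r i = 1 ∨ r i = 2) →
      ∫ ω, ∏ i ∈ s, (ξ i ω) ^ (r i) = ∏ i ∈ s, ∫ ω, (ξ i ω) ^ (r i))
    -- uniform boundedness
    (hbdd : ∃ M : ℝ, ∀ k, 1 ≤ k → ∀ᵐ ω ∂ℙ, |ξ k ω| ≤ M)
    (c : ℕ → ℝ) (hc : Summable fun k => (c k) ^ 2) :
    ∀ᵐ ω ∂ℙ, ∃ L : ℝ,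
      Tendsto (fun n => ∑ k ∈ Finset.Icc 1 n, c k * ξ k ω) atTop (nhds L) := by
  classical
  obtain ⟨M₀, hbdd₀⟩ := hbdd
  set M := max M₀ 1 with hMdef
  have hM : (1:ℝ) ≤ M := le_max_right _ _
  have hM0 : (0:ℝ) < M := lt_of_lt_of_le one_pos hM
  have hMae : ∀ᵐ ω ∂(ℙ : Measure Ω), ∀ k, 1 ≤ k → |ξ k ω| ≤ M := by
    rw [ae_all_iff]
    intro k
    by_cases hk : 1 ≤ k
    · filter_upwards [hbdd₀ k hk] with ω h using fun _ => le_trans h (le_max_left _ _)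
    · exact ae_of_all _ fun ω h => absurd h hk
  -- tail selection
  have htail : ∀ ε : ℝ, 0 < ε → ∃ m : ℕ, ∀ N, (∑ k ∈ Finset.Ioc m N, (c k)^2) ≤ ε := by
    intro ε hε
    have hca : CauchySeq (fun t => ∑ k ∈ Finset.range t, (c k)^2) :=
      hc.hasSum.tendsto_sum_nat.cauchySeq
    obtain ⟨t₀, ht₀⟩ := Metric.cauchySeq_iff.mp hca ε hε
    refine ⟨t₀, fun N => ?_⟩
    by_cases hN : N ≤ t₀
    · rw [Finset.Ioc_eq_empty (not_lt.mpr hN), Finset.sum_empty]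
      exact hε.le
    · push_neg at hN
      have heq : ∑ k ∈ Finset.Ioc t₀ N, (c k)^2
          = (∑ k ∈ Finset.range (N+1), (c k)^2) - ∑ k ∈ Finset.range (t₀+1), (c k)^2 := by
        rw [← Finset.sum_Ico_eq_sub _ (by omega)]
        congr 1
        rw [← Finset.Icc_add_one_left_eq_Ioc, ← Finset.Ico_add_one_right_eq_Icc]
      have := ht₀ (N+1) (by omega) (t₀+1) (by omega)
      rw [Real.dist_eq] at this
      have habs := le_abs_self ((∑ k ∈ Finset.range (N+1), (c k)^2)
        - ∑ k ∈ Finset.range (t₀+1), (c k)^2)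
      rw [heq]
      linarith
  -- parameters
  set w : ℕ → ℝ := fun j => (1/2:ℝ)^j / (1024*M*((j:ℝ)+1)) with hwdef
  set av : ℕ → ℝ := fun j => (1/2:ℝ)^j with havdef
  have hwpos : ∀ j, 0 < w j := by
    intro j
    apply div_pos (by positivity) (by positivity)
  have hsq : ∀ j, Real.sqrt ((w j)^2) = w j := fun j => Real.sqrt_sq (hwpos j).le
  have hchoice : ∀ j : ℕ, ∃ m : ℕ, ∀ N, (∑ k ∈ Finset.Ioc m N, (c k)^2) ≤ (w j)^2 :=
    fun j => htail _ (by positivity)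
  choose msel hmsel using hchoice
  -- events
  set F : ℕ → ℕ → Set Ω := fun j N =>
    {ω | ∃ n ∈ Finset.Ioc (msel j) N, av j ≤ |∑ k ∈ Finset.Ioc (msel j) n, c k * ξ k ω|} with hFdef
  set E : ℕ → Set Ω := fun j => ⋃ N, F j N with hEdef
  have hFb : ∀ j N, (ℙ : Measure Ω) (F j N)
      ≤ ENNReal.ofReal (2 * Real.exp (-(32*((j:ℝ)+1)))) := by
    intro j N
    have haj : 1024 * M * Real.sqrt ((w j)^2) ≤ av j := by
      rw [hsq j, hwdef]
      simp only
      rw [mul_div_assoc']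
      rw [div_le_iff₀ (by positivity)]
      have h1 : (1:ℝ) ≤ (j:ℝ)+1 := by
        have := Nat.cast_nonneg (α := ℝ) j
        linarith
      have h2 : (1024 * M * (1/2:ℝ)^j) * 1 ≤ (1024 * M * (1/2:ℝ)^j) * ((j:ℝ)+1) :=
        mul_le_mul_of_nonneg_left h1 (le_of_lt (by positivity))
      calc 1024 * M * (1/2:ℝ)^j = (1024 * M * (1/2:ℝ)^j) * 1 := by ring
        _ ≤ av j * (1024*M*((j:ℝ)+1)) := by
            rw [havdef]
            simp only
            nlinarith [h2]
    have hexp : av j / (32 * M * Real.sqrt ((w j)^2)) = 32*((j:ℝ)+1) := by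
      rw [hsq j, hwdef, havdef]
      simp only
      rw [div_eq_iff (by positivity)]
      field_simp
      ring
    have := max_ineq ξ hmeas hmean hmult hM hMae c N (msel j) N (Nat.le_add_left N (msel j))
      ((w j)^2) (av j) (by positivity) (hmsel j N) haj
    rw [hexp] at this
    exact this
  have hEb : ∀ j, (ℙ : Measure Ω) (E j)
      ≤ ENNReal.ofReal (2 * Real.exp (-(32*((j:ℝ)+1)))) := by
    intro j
    have hmono : Monotone (F j) := by
      intro N N' hNN ω hω
      obtain ⟨n, hn, h⟩ := hω
      exact ⟨n, Finset.mem_Ioc.mpr ⟨(Finset.mem_Ioc.mp hn).1,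
        le_trans (Finset.mem_Ioc.mp hn).2 hNN⟩, h⟩
    exact le_of_tendsto (tendsto_measure_iUnion_atTop hmono)
      (Filter.Eventually.of_forall (hFb j))
  -- Borel-Cantelli
  have hsum : (∑' j, (ℙ : Measure Ω) (E j)) ≠ ⊤ := by
    have h1 : (∑' j, (ℙ : Measure Ω) (E j))
        ≤ ∑' (j : ℕ), ENNReal.ofReal (2 * Real.exp (-(32*((j:ℝ)+1)))) := ENNReal.tsum_le_tsum hEb
    have hsummable : Summable (fun j : ℕ => 2 * Real.exp (-(32*((j:ℝ)+1)))) := by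
      have hr1 : Real.exp (-32) < 1 := Real.exp_lt_one_iff.mpr (by norm_num)
      have hr0 : 0 ≤ Real.exp (-32) := (Real.exp_pos _).le
      refine Summable.of_nonneg_of_le (fun j => by positivity)
        (fun j => ?_) ((summable_geometric_of_lt_one hr0 hr1).mul_left 2)
      have : Real.exp (-(32*((j:ℝ)+1))) ≤ Real.exp ((j:ℝ)*(-32)) := by
        apply Real.exp_le_exp.mpr
        push_cast
        nlinarith [Nat.cast_nonneg (α := ℝ) j]
      calc 2 * Real.exp (-(32*((j:ℝ)+1))) ≤ 2 * Real.exp ((j:ℝ)*(-32)) := by linarith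
        _ = 2 * Real.exp (-32) ^ j := by rw [← Real.exp_nat_mul]
    rw [← ENNReal.ofReal_tsum_of_nonneg (fun j => by positivity) hsummable] at h1
    exact ne_top_of_le_ne_top ENNReal.ofReal_ne_top h1
  have hBC := MeasureTheory.ae_eventually_notMem hsum
  -- conclusion
  filter_upwards [hBC] with ω hω
  apply cauchySeq_tendsto_of_complete
  rw [Metric.cauchySeq_iff']
  intro ε hε
  obtain ⟨J, hJ⟩ := Filter.eventually_atTop.mp hω
  obtain ⟨j₀, hj₀⟩ := exists_pow_lt_of_lt_one (half_pos hε) (by norm_num : (1/2:ℝ) < 1)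
  set j := max J j₀ with hjdef
  have hjJ : J ≤ j := le_max_left _ _
  have haj : av j < ε/2 := by
    rw [havdef]
    calc (1/2:ℝ)^j ≤ (1/2:ℝ)^j₀ :=
          pow_le_pow_of_le_one (by norm_num) (by norm_num) (le_max_right _ _)
      _ < ε/2 := hj₀
  have hnotE : ω ∉ E j := hJ j hjJ
  have hsmall : ∀ n, msel j < n → |∑ k ∈ Finset.Ioc (msel j) n, c k * ξ k ω| < av j := by
    intro n hn
    by_contra hcon
    push_neg at hcon
    exact hnotE (Set.mem_iUnion.mpr ⟨n, ⟨n, Finset.mem_Ioc.mpr ⟨hn, le_rfl⟩, hcon⟩⟩)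
  refine ⟨msel j + 1, fun n hn => ?_⟩
  have hIoc : ∀ t : ℕ, msel j ≤ t →
      (∑ k ∈ Finset.Icc 1 t, c k * ξ k ω)
        = (∑ k ∈ Finset.Icc 1 (msel j), c k * ξ k ω)
          + ∑ k ∈ Finset.Ioc (msel j) t, c k * ξ k ω := by
    intro t ht
    have h1 : ∀ u : ℕ, Finset.Icc 1 u = Finset.Ioc 0 u := fun u => by
      exact Finset.Icc_add_one_left_eq_Ioc 0 u
    rw [h1, h1]
    exact (Finset.sum_Ioc_consecutive _ (Nat.zero_le _) ht).symm
  rw [Real.dist_eq, hIoc n (by omega), hIoc (msel j + 1) (by omega)]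
  have h1 := hsmall n (by omega)
  have h2 := hsmall (msel j + 1) (by omega)
  have : |(∑ k ∈ Finset.Ioc (msel j) n, c k * ξ k ω)
      - ∑ k ∈ Finset.Ioc (msel j) (msel j + 1), c k * ξ k ω| < ε := by
    calc |(∑ k ∈ Finset.Ioc (msel j) n, c k * ξ k ω)
        - ∑ k ∈ Finset.Ioc (msel j) (msel j + 1), c k * ξ k ω|
        ≤ |∑ k ∈ Finset.Ioc (msel j) n, c k * ξ k ω|
          + |∑ k ∈ Finset.Ioc (msel j) (msel j + 1), c k * ξ k ω| := abs_sub _ _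
      _ < av j + av j := add_lt_add h1 h2
      _ < ε := by linarith
  convert this using 2
  ring
end

section
/- Let (ε_i)_{i≥1} be i.i.d. random variables with P(ε_1 = 1) = P(ε_1 = 0) = 1/2, and let Z_n be the length of the longest head run in the first n tosses. If (b_n) is a sequence of real numbers with ∑_{n=1}^∞ 2^{-b_n} = ∞, then almost surely Z_n ≥ b_n for infinitely many n. -/
open MeasureTheory ProbabilityTheory Filter Finset
open scoped ENNReal

section Aux

variable {Ω : Type*} [MeasureSpace Ω] [IsProbabilityMeasure (ℙ : Measure Ω)]

lemma indicator_one_mul_indicator_one (s t : Set Ω) (ω : Ω) :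
    s.indicator (1 : Ω → ℝ≥0∞) ω * t.indicator (1 : Ω → ℝ≥0∞) ω
      = (s ∩ t).indicator (1 : Ω → ℝ≥0∞) ω := by
  by_cases hs : ω ∈ s <;> by_cases ht : ω ∈ t <;>
    simp [Set.indicator_apply, hs, ht, Set.mem_inter_iff]

lemma meas_heads (ε : ℕ → Ω → ℕ)
    (hindep : iIndepFun ε ℙ)
    (h1 : ∀ i, ℙ {ω | ε i ω = 1} = 1/2) (J : Finset ℕ) :
    ℙ (⋂ j ∈ J, (ε j)⁻¹' {1}) = (1/2 : ℝ≥0∞) ^ J.card := by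
  rw [hindep.meas_biInter (S := J) (s := fun j => (ε j)⁻¹' {1})
      (fun i _ => ⟨{1}, measurableSet_singleton 1, rfl⟩)]
  rw [Finset.prod_congr rfl (fun i _ => show ℙ ((ε i)⁻¹' {1}) = 1/2 from h1 i),
    Finset.prod_const]

/-- Second-moment (Kochen–Stone style) Borel–Cantelli. -/
lemma second_moment_BC (B : ℕ → Set Ω) (hB : ∀ n, MeasurableSet (B n))
    (h2 : ∀ n l, n ≤ l →
      ℙ (B n ∩ B l) ≤ ℙ (B n) * ℙ (B l) + ℙ (B n) * (1/2 : ℝ≥0∞) ^ (l - n))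
    (hdiv : ∀ r : ℝ, ∃ N : ℕ, ENNReal.ofReal r ≤ ∑ n ∈ Finset.range N, ℙ (B n))
    (M : ℕ) : ℙ (⋃ (n : ℕ) (_ : M ≤ n), B n) = 1 := by
  classical
  set U : Set Ω := ⋃ (n : ℕ) (_ : M ≤ n), B n with hUdef
  have hUmeas : MeasurableSet U := by
    exact MeasurableSet.iUnion fun n => MeasurableSet.iUnion fun _ => hB n
  by_contra hne
  have hu_lt : ℙ U < 1 := lt_of_le_of_ne prob_le_one hne
  set c : ℝ := (ℙ U).toReal with hc
  have hu_ne_top : ℙ U ≠ ⊤ := measure_ne_top _ _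
  have hc_lt : c < 1 := by
    rw [hc, ← ENNReal.toReal_one]
    exact (ENNReal.toReal_lt_toReal hu_ne_top ENNReal.one_ne_top).2 hu_lt
  have hc_nonneg : 0 ≤ c := ENNReal.toReal_nonneg
  have h1c : 0 < 1 - c := by linarith
  -- pick N with big partial sum
  obtain ⟨N, hN⟩ := hdiv ((2 * M + 4) / (1 - c) + 1)
  set S : ℝ≥0∞ := ∑ n ∈ Finset.range N, ℙ (B n) with hSdef
  have hS_ne_top : S ≠ ⊤ := by
    rw [hSdef]
    exact (ENNReal.sum_lt_top.2 fun n _ => measure_lt_top _ _).ne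
  set a : ℝ := S.toReal with ha
  have ha_big : (2 * M + 4) / (1 - c) + 1 ≤ a := by
    rw [ha]
    exact (ENNReal.ofReal_le_iff_le_toReal hS_ne_top).1 hN
  have haM : (2 * (M:ℝ) + 4) / (1 - c) < a := by linarith
  -- the counting function
  set g : Ω → ℝ≥0∞ := fun ω => ∑ n ∈ Finset.range N, (B n).indicator 1 ω with hgdef
  have hgmeas : Measurable g := by
    apply Finset.measurable_sum
    intro n _
    exact Measurable.indicator measurable_one (hB n)
  have hg1 : ∫⁻ ω, g ω = S := by
    rw [hgdef, hSdef]
    beta_reduce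
    rw [lintegral_finset_sum _ (fun n _ => Measurable.indicator measurable_one (hB n))]
    exact Finset.sum_congr rfl fun n _ => lintegral_indicator_one (hB n)
  set T : ℝ≥0∞ := ∑ n ∈ Finset.range N, ∑ l ∈ Finset.range N, ℙ (B n ∩ B l) with hTdef
  have hg2 : ∫⁻ ω, g ω * g ω = T := by
    have hpt : ∀ ω, g ω * g ω
        = ∑ n ∈ Finset.range N, ∑ l ∈ Finset.range N, (B n ∩ B l).indicator 1 ω := by
      intro ω
      rw [hgdef, Finset.sum_mul_sum]
      exact Finset.sum_congr rfl fun n _ => Finset.sum_congr rfl fun l _ =>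
        indicator_one_mul_indicator_one _ _ _
    rw [lintegral_congr hpt, hTdef]
    beta_reduce
    rw [lintegral_finset_sum _ (fun n _ => Finset.measurable_sum _
      (fun l _ => Measurable.indicator measurable_one ((hB n).inter (hB l))))]
    refine Finset.sum_congr rfl fun n _ => ?_
    rw [lintegral_finset_sum _ (fun l _ => Measurable.indicator measurable_one
      ((hB n).inter (hB l)))]
    exact Finset.sum_congr rfl fun l _ => lintegral_indicator_one ((hB n).inter (hB l))
  -- geometric sum bound
  have hgeom : ∀ n : ℕ, ∑ l ∈ Finset.range N, (if n ≤ l then ((1:ℝ≥0∞)/2) ^ (l - n) else 0) ≤ 2 := by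
    intro n
    rw [← Finset.sum_filter]
    have : ∑ l ∈ (Finset.range N).filter (fun l => n ≤ l), ((1:ℝ≥0∞)/2) ^ (l - n)
        = ∑ d ∈ ((Finset.range N).filter (fun l => n ≤ l)).image (fun l => l - n),
            ((1:ℝ≥0∞)/2) ^ d := by
      rw [Finset.sum_image]
      intro x hx y hy hxy
      simp only [Finset.coe_filter, Finset.mem_filter, Set.mem_setOf_eq] at hx hy hxy
      omega
    rw [this]
    calc ∑ d ∈ ((Finset.range N).filter (fun l => n ≤ l)).image (fun l => l - n),
            ((1:ℝ≥0∞)/2) ^ d ≤ ∑' d : ℕ, ((1:ℝ≥0∞)/2) ^ d := ENNReal.sum_le_tsum _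
      _ = 2 := by
          rw [ENNReal.tsum_geometric]
          rw [one_div, ENNReal.one_sub_inv_two]
          simp
  -- second moment bound
  have hT : T ≤ S ^ 2 + 4 * S := by
    have hterm : ∀ n l, ℙ (B n ∩ B l) ≤ ℙ (B n) * ℙ (B l)
        + ((if n ≤ l then ℙ (B n) * ((1:ℝ≥0∞)/2) ^ (l - n) else 0)
          + (if l ≤ n then ℙ (B l) * ((1:ℝ≥0∞)/2) ^ (n - l) else 0)) := by
      intro n l
      rcases le_total n l with h | h
      · calc ℙ (B n ∩ B l) ≤ ℙ (B n) * ℙ (B l) + ℙ (B n) * ((1:ℝ≥0∞)/2) ^ (l - n) := h2 n l h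
          _ ≤ _ := by
              rw [if_pos h]
              exact add_le_add (le_refl _) (le_add_right (le_refl _))
      · calc ℙ (B n ∩ B l) = ℙ (B l ∩ B n) := by rw [Set.inter_comm]
          _ ≤ ℙ (B l) * ℙ (B n) + ℙ (B l) * ((1:ℝ≥0∞)/2) ^ (n - l) := h2 l n h
          _ ≤ _ := by
              rw [if_pos h, mul_comm (ℙ (B l)) (ℙ (B n))]
              exact add_le_add (le_refl _) (le_add_left (le_refl _))
    calc T ≤ ∑ n ∈ Finset.range N, ∑ l ∈ Finset.range N, (ℙ (B n) * ℙ (B l)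
        + ((if n ≤ l then ℙ (B n) * ((1:ℝ≥0∞)/2) ^ (l - n) else 0)
          + (if l ≤ n then ℙ (B l) * ((1:ℝ≥0∞)/2) ^ (n - l) else 0))) := by
          rw [hTdef]
          exact Finset.sum_le_sum fun n _ => Finset.sum_le_sum fun l _ => hterm n l
      _ = (∑ n ∈ Finset.range N, ∑ l ∈ Finset.range N, ℙ (B n) * ℙ (B l))
          + ((∑ n ∈ Finset.range N, ∑ l ∈ Finset.range N,
              (if n ≤ l then ℙ (B n) * ((1:ℝ≥0∞)/2) ^ (l - n) else 0))
            + (∑ n ∈ Finset.range N, ∑ l ∈ Finset.range N,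
              (if l ≤ n then ℙ (B l) * ((1:ℝ≥0∞)/2) ^ (n - l) else 0))) := by
          simp [Finset.sum_add_distrib]
      _ ≤ S ^ 2 + (2 * S + 2 * S) := by
          gcongr ?_ + (?_ + ?_)
          · rw [hSdef, sq, ← Finset.sum_mul_sum]
          · calc ∑ n ∈ Finset.range N, ∑ l ∈ Finset.range N,
                  (if n ≤ l then ℙ (B n) * ((1:ℝ≥0∞)/2) ^ (l - n) else 0)
                = ∑ n ∈ Finset.range N, ℙ (B n) * ∑ l ∈ Finset.range N,
                  (if n ≤ l then ((1:ℝ≥0∞)/2) ^ (l - n) else 0) := by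
                  refine Finset.sum_congr rfl fun n _ => ?_
                  rw [Finset.mul_sum]
                  exact Finset.sum_congr rfl fun l _ => by rw [mul_ite, mul_zero]
              _ ≤ ∑ n ∈ Finset.range N, ℙ (B n) * 2 :=
                  Finset.sum_le_sum fun n _ => mul_le_mul_right (hgeom n) _
              _ = 2 * S := by rw [hSdef, ← Finset.sum_mul, mul_comm]
          · rw [Finset.sum_comm]
            calc ∑ l ∈ Finset.range N, ∑ n ∈ Finset.range N,
                  (if l ≤ n then ℙ (B l) * ((1:ℝ≥0∞)/2) ^ (n - l) else 0)
                = ∑ l ∈ Finset.range N, ℙ (B l) * ∑ n ∈ Finset.range N,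
                  (if l ≤ n then ((1:ℝ≥0∞)/2) ^ (n - l) else 0) := by
                  refine Finset.sum_congr rfl fun l _ => ?_
                  rw [Finset.mul_sum]
                  exact Finset.sum_congr rfl fun n _ => by rw [mul_ite, mul_zero]
              _ ≤ ∑ l ∈ Finset.range N, ℙ (B l) * 2 :=
                  Finset.sum_le_sum fun l _ => mul_le_mul_right (hgeom l) _
              _ = 2 * S := by rw [hSdef, ← Finset.sum_mul, mul_comm]
      _ = S ^ 2 + 4 * S := by ring
  -- the big-count event
  set A : Set Ω := {ω | (M : ℝ≥0∞) < g ω} with hAdef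
  have hAmeas : MeasurableSet A := measurableSet_lt measurable_const hgmeas
  have hAU : A ⊆ U := by
    intro ω hω
    have hcard : g ω = (((Finset.range N).filter (fun n => ω ∈ B n)).card : ℝ≥0∞) := by
      rw [hgdef]
      simp only []
      rw [Finset.card_filter]
      push_cast
      exact Finset.sum_congr rfl fun n _ => by
        by_cases h : ω ∈ B n <;> simp [Set.indicator_apply, h]
    have hMlt : M < ((Finset.range N).filter (fun n => ω ∈ B n)).card := by
      have := hω
      rw [hAdef, Set.mem_setOf_eq, hcard] at this
      exact_mod_cast this
    obtain ⟨n, hn, hMn⟩ : ∃ n ∈ (Finset.range N).filter (fun n => ω ∈ B n), M ≤ n := by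
      by_contra hno
      push_neg at hno
      have hsub : (Finset.range N).filter (fun n => ω ∈ B n) ⊆ Finset.range M := by
        intro x hx
        exact Finset.mem_range.2 (hno x hx)
      have := Finset.card_le_card hsub
      rw [Finset.card_range] at this
      omega
    rw [Finset.mem_filter] at hn
    exact Set.mem_iUnion₂.2 ⟨n, hMn, hn.2⟩
  -- main chain: S ≤ T^(1/2) * u^(1/2) + M
  have hsplit : S = (∫⁻ ω in A, g ω) + ∫⁻ ω in Aᶜ, g ω := by
    rw [← hg1]; exact (lintegral_add_compl g hAmeas).symm
  have hcompl : (∫⁻ ω in Aᶜ, g ω) ≤ (M : ℝ≥0∞) := by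
    calc (∫⁻ ω in Aᶜ, g ω) ≤ ∫⁻ _ in Aᶜ, (M : ℝ≥0∞) := by
          refine setLIntegral_mono measurable_const fun ω hω => ?_
          have : ¬ (M : ℝ≥0∞) < g ω := hω
          exact not_lt.1 this
      _ = (M : ℝ≥0∞) * ℙ Aᶜ := setLIntegral_const _ _
      _ ≤ (M : ℝ≥0∞) * 1 := mul_le_mul_right prob_le_one _
      _ = (M : ℝ≥0∞) := mul_one _
  have hCS : (∫⁻ ω in A, g ω) ≤ T ^ ((1:ℝ)/2) * (ℙ U) ^ ((1:ℝ)/2) := by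
    have hind : (∫⁻ ω in A, g ω) = ∫⁻ ω, g ω * A.indicator (1 : Ω → ℝ≥0∞) ω := by
      rw [← lintegral_indicator hAmeas]
      refine lintegral_congr fun ω => ?_
      by_cases h : ω ∈ A <;> simp [Set.indicator_apply, h]
    rw [hind]
    have hconj : Real.HolderConjugate 2 2 := Real.holderConjugate_iff.mpr ⟨by norm_num, by norm_num⟩
    have hH := ENNReal.lintegral_mul_le_Lp_mul_Lq (μ := ℙ) hconj hgmeas.aemeasurable
      (Measurable.indicator measurable_one hAmeas : Measurable (A.indicator (1 : Ω → ℝ≥0∞))).aemeasurable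
    simp only [Pi.mul_apply] at hH
    calc ∫⁻ ω, g ω * A.indicator (1 : Ω → ℝ≥0∞) ω
        ≤ (∫⁻ ω, g ω ^ (2:ℝ)) ^ ((1:ℝ)/2) * (∫⁻ ω, A.indicator (1 : Ω → ℝ≥0∞) ω ^ (2:ℝ)) ^ ((1:ℝ)/2) :=
          hH
      _ ≤ T ^ ((1:ℝ)/2) * (ℙ U) ^ ((1:ℝ)/2) := by
          have e1 : (∫⁻ ω, g ω ^ (2:ℝ)) = T := by
            rw [← hg2]
            exact lintegral_congr fun ω => by
              rw [show (2:ℝ) = ((2:ℕ):ℝ) by norm_num, ENNReal.rpow_natCast, sq]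
          have e2 : (∫⁻ ω, A.indicator (1 : Ω → ℝ≥0∞) ω ^ (2:ℝ)) = ℙ A := by
            rw [← lintegral_indicator_one hAmeas]
            exact lintegral_congr fun ω => by
              by_cases h : ω ∈ A <;> simp [Set.indicator_apply, h, ENNReal.rpow_two]
          rw [e1, e2]
          exact mul_le_mul_right (ENNReal.rpow_le_rpow (measure_mono hAU) (by norm_num)) _
  have hSle : S ≤ T ^ ((1:ℝ)/2) * (ℙ U) ^ ((1:ℝ)/2) + (M : ℝ≥0∞) := by
    rw [hsplit]
    exact add_le_add hCS hcompl
  -- convert to reals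
  have hT_ne_top : T ≠ ⊤ := by
    refine ne_top_of_le_ne_top ?_ hT
    exact (ENNReal.add_ne_top.2 ⟨(ENNReal.pow_ne_top hS_ne_top), ENNReal.mul_ne_top
      (by norm_num) hS_ne_top⟩)
  have hrhs_ne_top : T ^ ((1:ℝ)/2) * (ℙ U) ^ ((1:ℝ)/2) + (M : ℝ≥0∞) ≠ ⊤ := by
    refine ENNReal.add_ne_top.2 ⟨ENNReal.mul_ne_top ?_ ?_, ENNReal.natCast_ne_top M⟩
    · exact ENNReal.rpow_ne_top_of_nonneg (by norm_num) hT_ne_top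
    · exact ENNReal.rpow_ne_top_of_nonneg (by norm_num) hu_ne_top
  have hreal : a ≤ (T.toReal) ^ ((1:ℝ)/2) * c ^ ((1:ℝ)/2) + M := by
    have := ENNReal.toReal_mono hrhs_ne_top hSle
    rw [ENNReal.toReal_add (ENNReal.mul_ne_top
        (ENNReal.rpow_ne_top_of_nonneg (by norm_num) hT_ne_top)
        (ENNReal.rpow_ne_top_of_nonneg (by norm_num) hu_ne_top)) (ENNReal.natCast_ne_top M),
      ENNReal.toReal_mul, ← ENNReal.toReal_rpow, ← ENNReal.toReal_rpow,
      ENNReal.toReal_natCast] at this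
    exact this
  have hTreal : T.toReal ≤ a ^ 2 + 4 * a := by
    have := ENNReal.toReal_mono (by
      exact ENNReal.add_ne_top.2 ⟨ENNReal.pow_ne_top hS_ne_top,
        ENNReal.mul_ne_top (by norm_num) hS_ne_top⟩) hT
    rw [ENNReal.toReal_add (ENNReal.pow_ne_top hS_ne_top)
        (ENNReal.mul_ne_top (by norm_num) hS_ne_top), ENNReal.toReal_pow,
      ENNReal.toReal_mul] at this
    simpa using this
  -- final real contradiction
  have ha_nonneg : 0 ≤ a := ENNReal.toReal_nonneg
  have hT_nonneg : 0 ≤ T.toReal := ENNReal.toReal_nonneg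
  have hMa : (M:ℝ) ≤ a := by
    have h24 : 2 * (M:ℝ) + 4 ≤ (2 * M + 4) / (1 - c) := by
      rw [le_div_iff₀ h1c]
      nlinarith [hc_nonneg]
    nlinarith
  have hsq : (a - M) ^ 2 ≤ (a ^ 2 + 4 * a) * c := by
    have hy : a - M ≤ (T.toReal * c) ^ ((1:ℝ)/2) := by
      rw [← Real.mul_rpow hT_nonneg hc_nonneg] at hreal
      linarith
    have hy2 : ((T.toReal * c) ^ ((1:ℝ)/2)) ^ 2 = T.toReal * c := by
      rw [← Real.rpow_natCast ((T.toReal * c) ^ ((1:ℝ)/2)) 2,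
        ← Real.rpow_mul (by positivity)]
      norm_num
    calc (a - M) ^ 2 ≤ ((T.toReal * c) ^ ((1:ℝ)/2)) ^ 2 := by
          apply sq_le_sq'
          · nlinarith [Real.rpow_nonneg (by positivity : (0:ℝ) ≤ T.toReal * c) ((1:ℝ)/2)]
          · exact hy
      _ = T.toReal * c := hy2
      _ ≤ (a ^ 2 + 4 * a) * c := by nlinarith
  have hac : a * (1 - c) > 2 * M + 4 := by
    rw [div_lt_iff₀ h1c] at haM
    linarith
  nlinarith [sq_nonneg (a - M), hc_nonneg, hc_lt, ha_nonneg]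

end Aux

/-- (Erdős–Révész, upper-lower class.) For fair coin tossing, if
`∑ 2^{-b_n} = ∞` then almost surely `Z_n ≥ b_n` for infinitely many `n`, where `Z_n` is
the length of the longest head run in the first `n` tosses. -/
theorem longest_head_run_upper_lower
    {Ω : Type*} [MeasureSpace Ω] [IsProbabilityMeasure (ℙ : Measure Ω)]
    (ε : ℕ → Ω → ℕ) (hmeas : ∀ i, Measurable (ε i))
    (hindep : iIndepFun ε ℙ)
    (h1 : ∀ i, ℙ {ω | ε i ω = 1} = 1/2)
    (h0 : ∀ i, ℙ {ω | ε i ω = 0} = 1/2)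
    (Z : ℕ → Ω → ℕ)
    (hZ : ∀ n ω, Z n ω =
      sSup {ℓ : ℕ | ∃ k, k + ℓ ≤ n ∧ ∀ i < ℓ, ε (k + i + 1) ω = 1})
    (b : ℕ → ℝ) (hb : ¬ Summable fun n => (2 : ℝ) ^ (-b n)) :
    ∀ᵐ ω ∂ℙ, ∀ n₀ : ℕ, ∃ n > n₀, (Z n ω : ℝ) ≥ b n := by
  classical
  by_cases hcase : ∃ N₀ : ℕ, ∀ n, N₀ ≤ n → 0 < b n
  case neg =>
    push_neg at hcase
    refine ae_of_all _ fun ω n₀ => ?_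
    obtain ⟨n, hn, hbn⟩ := hcase (n₀ + 1)
    exact ⟨n, by omega, le_trans hbn (Nat.cast_nonneg _)⟩
  case pos =>
  obtain ⟨N₀, hN₀⟩ := hcase
  set m : ℕ → ℕ := fun n => ⌈b n⌉₊ with hm
  set P : ℕ → Prop := fun n => N₀ ≤ n ∧ m n ≤ n with hPdef
  set B : ℕ → Set Ω := fun n =>
    if P n then ⋂ j ∈ Finset.Icc (n - m n + 1) n, (ε j) ⁻¹' {1} else ∅ with hBdef
  have hBmeas : ∀ n, MeasurableSet (B n) := by
    intro n
    rcases em (P n) with hp | hp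
    · have hBn : B n = ⋂ j ∈ Finset.Icc (n - m n + 1) n, (ε j) ⁻¹' {1} := by
        rw [hBdef]; simp only [if_pos hp]
      rw [hBn]
      exact Finset.measurableSet_biInter _ fun j _ => (hmeas j) (measurableSet_singleton 1)
    · have hBn : B n = ∅ := by rw [hBdef]; simp only [if_neg hp]
      rw [hBn]
      exact MeasurableSet.empty
  have hBP : ∀ n, P n → ℙ (B n) = (1/2 : ℝ≥0∞) ^ (m n) := by
    intro n hp
    have : B n = ⋂ j ∈ Finset.Icc (n - m n + 1) n, (ε j) ⁻¹' {1} := by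
      rw [hBdef]; simp only [if_pos hp]
    rw [this, meas_heads ε hindep h1]
    congr 1
    rw [Nat.card_Icc]
    have := hp.2
    omega
  -- pairwise second-moment bound
  have h2 : ∀ n l, n ≤ l →
      ℙ (B n ∩ B l) ≤ ℙ (B n) * ℙ (B l) + ℙ (B n) * (1/2 : ℝ≥0∞) ^ (l - n) := by
    intro n l hnl
    by_cases pn : P n
    swap
    · have : B n = ∅ := by rw [hBdef]; simp only [if_neg pn]
      rw [this]; simp
    by_cases pl : P l
    swap
    · have : B l = ∅ := by rw [hBdef]; simp only [if_neg pl]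
      rw [this]; simp
    have hmn := pn.2
    have hml := pl.2
    have hBn : B n = ⋂ j ∈ Finset.Icc (n - m n + 1) n, (ε j) ⁻¹' {1} := by
      rw [hBdef]; simp only [if_pos pn]
    have hBl : B l = ⋂ j ∈ Finset.Icc (l - m l + 1) l, (ε j) ⁻¹' {1} := by
      rw [hBdef]; simp only [if_pos pl]
    have hunion : B n ∩ B l
        = ⋂ j ∈ (Finset.Icc (n - m n + 1) n ∪ Finset.Icc (l - m l + 1) l), (ε j) ⁻¹' {1} := by
      rw [hBn, hBl, Finset.set_biInter_inter]
    have c1 : (Finset.Icc (n - m n + 1) n).card = m n := by rw [Nat.card_Icc]; omega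
    have c2 : (Finset.Icc (l - m l + 1) l).card = m l := by rw [Nat.card_Icc]; omega
    by_cases hd : n + m l ≤ l
    · -- disjoint blocks: independence
      have hdisj : Disjoint (Finset.Icc (n - m n + 1) n) (Finset.Icc (l - m l + 1) l) := by
        rw [Finset.disjoint_left]
        intro x hx1 hx2
        rw [Finset.mem_Icc] at hx1 hx2
        omega
      have : ℙ (B n ∩ B l) = ℙ (B n) * ℙ (B l) := by
        rw [hunion, meas_heads ε hindep h1, Finset.card_union_of_disjoint hdisj, c1, c2,
          pow_add, hBP n pn, hBP l pl]
      rw [this]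
      exact le_add_right (le_refl _)
    · -- overlapping blocks
      push_neg at hd
      have hsub : Finset.Icc (n - m n + 1) l
          ⊆ Finset.Icc (n - m n + 1) n ∪ Finset.Icc (l - m l + 1) l := by
        intro x hx
        rw [Finset.mem_Icc] at hx
        rw [Finset.mem_union, Finset.mem_Icc, Finset.mem_Icc]
        omega
      have hcard : m n + (l - n)
          ≤ (Finset.Icc (n - m n + 1) n ∪ Finset.Icc (l - m l + 1) l).card := by
        calc m n + (l - n) = (Finset.Icc (n - m n + 1) l).card := by
              rw [Nat.card_Icc]; omega
          _ ≤ _ := Finset.card_le_card hsub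
      calc ℙ (B n ∩ B l)
          = (1/2 : ℝ≥0∞) ^ (Finset.Icc (n - m n + 1) n ∪ Finset.Icc (l - m l + 1) l).card := by
            rw [hunion, meas_heads ε hindep h1]
        _ ≤ (1/2 : ℝ≥0∞) ^ (m n + (l - n)) :=
            pow_le_pow_right_of_le_one' (by norm_num) hcard
        _ = ℙ (B n) * (1/2 : ℝ≥0∞) ^ (l - n) := by rw [pow_add, hBP n pn]
        _ ≤ _ := le_add_left (le_refl _)
  -- divergence of the restricted series
  have hns : ¬ Summable (fun n => if P n then (2:ℝ) ^ (-b n) else 0) := by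
    intro hsum
    apply hb
    have hrest : Summable (fun n => if P n then 0 else (2:ℝ) ^ (-b n)) := by
      rw [← summable_nat_add_iff N₀]
      apply Summable.of_nonneg_of_le (f := fun k : ℕ => ((2:ℝ) ^ k)⁻¹)
      · intro k
        by_cases hp : P (k + N₀)
        · rw [if_pos hp]
        · rw [if_neg hp]
          positivity
      · intro k
        by_cases hp : P (k + N₀)
        · rw [if_pos hp]; positivity
        · rw [if_neg hp]
          have hge : ((k + N₀ : ℕ) : ℝ) < b (k + N₀) := by
            by_contra hle
            push_neg at hle
            exact hp ⟨Nat.le_add_left _ _, Nat.ceil_le.2 hle⟩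
          have : (2:ℝ) ^ (-b (k + N₀)) ≤ (2:ℝ) ^ (-(k:ℝ)) := by
            apply Real.rpow_le_rpow_of_exponent_le (by norm_num)
            push_cast at hge ⊢
            linarith
          calc (2:ℝ) ^ (-b (k + N₀)) ≤ (2:ℝ) ^ (-(k:ℝ)) := this
            _ = ((2:ℝ) ^ (k:ℕ))⁻¹ := by
                rw [Real.rpow_neg (by norm_num), Real.rpow_natCast]
      · have hg : Summable (fun k : ℕ => (1/2:ℝ) ^ k) :=
          summable_geometric_of_lt_one (by norm_num) (by norm_num)
        refine hg.congr fun k => ?_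
        rw [one_div, inv_pow]
    have := hsum.add hrest
    refine this.congr fun n => ?_
    by_cases hp : P n
    · rw [if_pos hp, if_pos hp, add_zero]
    · rw [if_neg hp, if_neg hp, zero_add]
  have htend : Tendsto (fun N => ∑ i ∈ Finset.range N, if P i then (2:ℝ) ^ (-b i) else 0)
      atTop atTop := by
    refine (not_summable_iff_tendsto_nat_atTop_of_nonneg (fun n => ?_)).1 hns
    by_cases hp : P n
    · rw [if_pos hp]; positivity
    · rw [if_neg hp]
  have hhalf : ENNReal.ofReal (1/2 : ℝ) = (1/2 : ℝ≥0∞) := by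
    rw [ENNReal.ofReal_div_of_pos (by norm_num), ENNReal.ofReal_one, ENNReal.ofReal_ofNat]
  have hdiv : ∀ r : ℝ, ∃ N : ℕ, ENNReal.ofReal r ≤ ∑ n ∈ Finset.range N, ℙ (B n) := by
    intro r
    obtain ⟨N, hN⟩ := (htend.eventually_ge_atTop (2 * r)).exists
    refine ⟨N, ?_⟩
    have hle : ∀ n, ENNReal.ofReal ((1/2) * (if P n then (2:ℝ) ^ (-b n) else 0)) ≤ ℙ (B n) := by
      intro n
      by_cases hp : P n
      · rw [if_pos hp, hBP n hp]
        have h0b : 0 ≤ b n := (hN₀ n hp.1).le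
        have hceil : (⌈b n⌉₊ : ℝ) < b n + 1 := Nat.ceil_lt_add_one h0b
        have hreal : (1/2:ℝ) * (2:ℝ) ^ (-b n) ≤ (1/2:ℝ) ^ (m n) := by
          have e1 : (1/2:ℝ) ^ (m n) = (2:ℝ) ^ (-(m n : ℝ)) := by
            rw [Real.rpow_neg (by norm_num), Real.rpow_natCast, one_div, inv_pow]
          have e2 : (1/2:ℝ) * (2:ℝ) ^ (-b n) = (2:ℝ) ^ (-b n - 1) := by
            rw [Real.rpow_sub (by norm_num), Real.rpow_one]; ring
          rw [e1, e2]
          apply Real.rpow_le_rpow_of_exponent_le (by norm_num)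
          simp only [hm] at hceil ⊢
          linarith
        calc ENNReal.ofReal ((1/2) * (2:ℝ) ^ (-b n))
            ≤ ENNReal.ofReal ((1/2:ℝ) ^ (m n)) := ENNReal.ofReal_le_ofReal hreal
          _ = (1/2 : ℝ≥0∞) ^ (m n) := by rw [ENNReal.ofReal_pow (by norm_num), hhalf]
      · simp [hp]
    calc ENNReal.ofReal r
        ≤ ENNReal.ofReal (∑ n ∈ Finset.range N, (1/2) * (if P n then (2:ℝ) ^ (-b n) else 0)) := by
          apply ENNReal.ofReal_le_ofReal
          rw [← Finset.mul_sum]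
          linarith
      _ = ∑ n ∈ Finset.range N, ENNReal.ofReal ((1/2) * (if P n then (2:ℝ) ^ (-b n) else 0)) := by
          refine ENNReal.ofReal_sum_of_nonneg fun n _ => ?_
          by_cases hp : P n
          · rw [if_pos hp]; positivity
          · rw [if_neg hp]; simp
      _ ≤ ∑ n ∈ Finset.range N, ℙ (B n) := Finset.sum_le_sum fun n _ => hle n
  -- apply the second-moment Borel–Cantelli
  have hU : ∀ M : ℕ, ℙ (⋃ (n : ℕ) (_ : M ≤ n), B n) = 1 := second_moment_BC B hBmeas h2 hdiv
  have hae : ∀ᵐ ω ∂ℙ, ∀ M : ℕ, ω ∈ ⋃ (n : ℕ) (_ : M ≤ n), B n := by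
    rw [ae_all_iff]
    intro M
    have hmeasU : MeasurableSet (⋃ (n : ℕ) (_ : M ≤ n), B n) :=
      MeasurableSet.iUnion fun n => MeasurableSet.iUnion fun _ => hBmeas n
    have hcompl := measure_compl hmeasU (measure_ne_top ℙ _)
    rw [hU M, measure_univ, tsub_self] at hcompl
    rw [ae_iff]
    exact hcompl
  filter_upwards [hae] with ω hω n₀
  obtain ⟨n, hn, hωB⟩ := Set.mem_iUnion₂.1 (hω (n₀ + 1))
  have pn : P n := by
    by_contra hp
    have : B n = ∅ := by rw [hBdef]; simp only [if_neg hp]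
    rw [this] at hωB
    exact hωB
  have hrun : ∀ i < m n, ε (n - m n + i + 1) ω = 1 := by
    intro i hi
    have hmemIcc : n - m n + i + 1 ∈ Finset.Icc (n - m n + 1) n := by
      rw [Finset.mem_Icc]
      have := pn.2
      omega
    have hB' : B n = ⋂ j ∈ Finset.Icc (n - m n + 1) n, (ε j) ⁻¹' {1} := by
      rw [hBdef]; simp only [if_pos pn]
    rw [hB'] at hωB
    exact Set.mem_iInter₂.1 hωB _ hmemIcc
  have hmem : m n ∈ {ℓ : ℕ | ∃ k, k + ℓ ≤ n ∧ ∀ i < ℓ, ε (k + i + 1) ω = 1} := by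
    refine ⟨n - m n, ?_, hrun⟩
    have := pn.2
    omega
  have hbdd : BddAbove {ℓ : ℕ | ∃ k, k + ℓ ≤ n ∧ ∀ i < ℓ, ε (k + i + 1) ω = 1} := by
    refine ⟨n, fun ℓ hℓ => ?_⟩
    obtain ⟨k, hk, -⟩ := hℓ
    omega
  have hZn : m n ≤ Z n ω := by
    rw [hZ n ω]
    exact le_csSup hbdd hmem
  refine ⟨n, by omega, ?_⟩
  calc b n ≤ (⌈b n⌉₊ : ℝ) := Nat.le_ceil _
    _ ≤ (Z n ω : ℝ) := by exact_mod_cast hZn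
end
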